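/- If G is a directed cycle of length N, there exists a vector linear index coding scheme for G with message length m = N per receiver, broadcast rate β = N − 1, and locality r = 2(N−1)/N; in particular the optimal broadcast rate N − 1 is achievable with locality strictly less than 2. -/

import Mathlib

open Finset

/-- A unicast index coding problem on `N` receivers: receiver `i` demands message `i`
and knows messages indexed by `K i` as side information, with `i ∉ K i`. -/
structure IndexProblem (N : ℕ) where
  K : Fin N → Finset (Fin N)
  not_self : ∀ i, i ∉ K i

/-- A valid index code over alphabet `A` with message length `m` and codeword length `ℓ`:
an encoder together with query sets `R i`, such that receiver `i` can decode `x i`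
exactly from the queried codeword symbols `c_{R i}` and its side information. -/
structure IndexCode (N : ℕ) (G : IndexProblem N) (A : Type*) (m ℓ : ℕ) where
  enc : (Fin N → Fin m → A) → Fin ℓ → A
  R : Fin N → Finset (Fin ℓ)
  valid : ∀ (i : Fin N) (x y : Fin N → Fin m → A),
    (∀ t ∈ R i, enc x t = enc y t) → (∀ j ∈ G.K i, x j = y j) → x i = y i

/-- The optimal broadcast rate function `β_G^*(r)`: the infimum of broadcast rates `ℓ/m`
over all message lengths `m ≥ 1` and valid index codes with locality at most `r`. -/
noncomputable def betaStar (A : Type*) {N : ℕ} (G : IndexProblem N) (r : ℝ) : ℝ :=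
  sInf {β : ℝ | ∃ (m ℓ : ℕ) (_ : 0 < m) (C : IndexCode N G A m ℓ),
    (∀ i, ((C.R i).card : ℝ) ≤ r * m) ∧ β = (ℓ : ℝ) / m}


section

def fm (N : ℕ) (hN : 2 ≤ N) (n : ℕ) : Fin N := ⟨n % N, Nat.mod_lt _ (lt_of_lt_of_le two_pos hN)⟩

lemma fm_val (N : ℕ) (hN : 2 ≤ N) (i : Fin N) : fm N hN i.val = i := Fin.ext (Nat.mod_eq_of_lt i.isLt)

lemma fm_congr (N : ℕ) (hN : 2 ≤ N) {a b : ℕ} (h : a % N = b % N) : fm N hN a = fm N hN b := Fin.ext h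

def cIdx (N : ℕ) (hN : 2 ≤ N) (b : Fin N) (j : Fin (N - 1)) : Fin (N * (N - 1)) :=
  ⟨(N - 1) * b.val + j.val, by
    have h1 : (N - 1) * b.val + j.val < (N - 1) * (b.val + 1) := by
      have := j.isLt; rw [Nat.mul_add, Nat.mul_one]; omega
    have h2 : (N - 1) * (b.val + 1) ≤ (N - 1) * N := Nat.mul_le_mul_left _ b.isLt
    have h3 : (N - 1) * N = N * (N - 1) := Nat.mul_comm _ _
    omega⟩

def cJ (N : ℕ) (hN : 2 ≤ N) (i b : Fin N) : Fin (N - 1) :=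
  ⟨min ((i.val + N - b.val) % N) (N - 2), by
    have := min_le_right ((i.val + N - b.val) % N) (N - 2); omega⟩

def cEnc (N : ℕ) (hN : 2 ≤ N) (F : Type*) [Field F] (x : Fin N → Fin N → F) (t : Fin (N * (N - 1))) : F :=
  x (fm N hN (t.val / (N - 1) + t.val % (N - 1))) (fm N hN (t.val / (N - 1)))
  + x (fm N hN (t.val / (N - 1) + t.val % (N - 1) + 1)) (fm N hN (t.val / (N - 1)))

lemma cIdx_div (N : ℕ) (hN : 2 ≤ N) (b : Fin N) (j : Fin (N - 1)) :
    (cIdx N hN b j).val / (N - 1) = b.val := by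
  show ((N - 1) * b.val + j.val) / (N - 1) = b.val
  rw [Nat.mul_add_div (by omega), Nat.div_eq_of_lt j.isLt, Nat.add_zero]

lemma cIdx_mod (N : ℕ) (hN : 2 ≤ N) (b : Fin N) (j : Fin (N - 1)) :
    (cIdx N hN b j).val % (N - 1) = j.val := by
  show ((N - 1) * b.val + j.val) % (N - 1) = j.val
  rw [Nat.mul_add_mod, Nat.mod_eq_of_lt j.isLt]

lemma cEnc_idx (N : ℕ) (hN : 2 ≤ N) (F : Type*) [Field F] (x : Fin N → Fin N → F) (b : Fin N) (j : Fin (N - 1)) :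
    cEnc N hN F x (cIdx N hN b j) =
      x (fm N hN (b.val + j.val)) (fm N hN b.val)
      + x (fm N hN (b.val + j.val + 1)) (fm N hN b.val) := by
  unfold cEnc
  rw [cIdx_div, cIdx_mod]

def cR (N : ℕ) (hN : 2 ≤ N) (i : Fin N) : Finset (Fin (N * (N - 1))) :=
  ((univ.erase (fm N hN (i.val + 1))).image (fun b => cIdx N hN b (cJ N hN i b)))
  ∪ (univ.image fun j : Fin (N - 1) => cIdx N hN (fm N hN (i.val + 1)) j)

lemma cR_card (N : ℕ) (hN : 2 ≤ N) (i : Fin N) : (cR N hN i).card ≤ 2 * (N - 1) := by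
  have h1 : ((univ.erase (fm N hN (i.val + 1))).image
      (fun b => cIdx N hN b (cJ N hN i b))).card ≤ N - 1 := by
    refine le_trans (card_image_le) ?_
    rw [card_erase_of_mem (mem_univ _), card_univ, Fintype.card_fin]
  have h2 : ((univ : Finset (Fin (N - 1))).image
      fun j => cIdx N hN (fm N hN (i.val + 1)) j).card ≤ N - 1 := by
    refine le_trans (card_image_le) ?_
    rw [card_univ, Fintype.card_fin]
  have := card_union_le ((univ.erase (fm N hN (i.val + 1))).image
      (fun b => cIdx N hN b (cJ N hN i b)))
      ((univ : Finset (Fin (N - 1))).image fun j => cIdx N hN (fm N hN (i.val + 1)) j)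
  unfold cR
  omega

lemma cValid (N : ℕ) (hN : 2 ≤ N) (F : Type*) [Field F] (i : Fin N) (x y : Fin N → Fin N → F)
    (henc : ∀ t ∈ cR N hN i, cEnc N hN F x t = cEnc N hN F y t)
    (hside : x (fm N hN (i.val + 1)) = y (fm N hN (i.val + 1))) :
    x i = y i := by
  funext bc
  by_cases hb : bc = fm N hN (i.val + 1)
  · subst hb
    set a := fm N hN (i.val + 1) with ha
    have key : ∀ j : ℕ, j ≤ N - 1 →
        x (fm N hN (a.val + j)) a = y (fm N hN (a.val + j)) a := by
      intro j
      induction j with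
      | zero =>
        intro _
        have h0 : fm N hN (a.val + 0) = a := by rw [Nat.add_zero]; exact fm_val N hN a
        rw [h0]
        exact congrFun hside a
      | succ j ih =>
        intro hj1
        have hj : j < N - 1 := by omega
        have ht : cIdx N hN a ⟨j, hj⟩ ∈ cR N hN i :=
          mem_union_right _ (mem_image.2 ⟨⟨j, hj⟩, mem_univ _, rfl⟩)
        have he := henc _ ht
        rw [cEnc_idx, cEnc_idx] at he
        rw [fm_val] at he
        have h1 := ih (by omega)
        rw [h1] at he
        exact add_left_cancel he
    have := key (N - 1) le_rfl
    have hfin : fm N hN (a.val + (N - 1)) = i := by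
      apply Fin.ext
      show (a.val + (N - 1)) % N = i.val
      have hav : a.val = (i.val + 1) % N := rfl
      rw [hav, Nat.mod_add_mod, show i.val + 1 + (N - 1) = i.val + N from by omega,
        Nat.add_mod_right, Nat.mod_eq_of_lt i.isLt]
    rw [hfin] at this
    exact this
  · have hbc := bc.isLt
    have hi := i.isLt
    have hL1 : (bc.val + (i.val + N - bc.val) % N) % N = i.val := by
      rw [Nat.add_mod_mod, show bc.val + (i.val + N - bc.val) = i.val + N from by omega,
        Nat.add_mod_right, Nat.mod_eq_of_lt i.isLt]
    have hjv : (i.val + N - bc.val) % N < N - 1 := by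
      have hjvN : (i.val + N - bc.val) % N < N := Nat.mod_lt _ (by omega)
      by_contra h'
      have hje : (i.val + N - bc.val) % N = N - 1 := by omega
      apply hb
      apply Fin.ext
      show bc.val = (i.val + 1) % N
      rw [hje] at hL1
      calc bc.val = bc.val % N := (Nat.mod_eq_of_lt hbc).symm
        _ = (bc.val + N) % N := (Nat.add_mod_right _ _).symm
        _ = (bc.val + (N - 1) + 1) % N := by rw [show bc.val + (N - 1) + 1 = bc.val + N from by omega]
        _ = ((bc.val + (N - 1)) % N + 1) % N := (Nat.mod_add_mod _ _ _).symm
        _ = (i.val + 1) % N := by rw [hL1]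
    have hcJ : (cJ N hN i bc).val = (i.val + N - bc.val) % N := by
      show min ((i.val + N - bc.val) % N) (N - 2) = (i.val + N - bc.val) % N
      omega
    have ht : cIdx N hN bc (cJ N hN i bc) ∈ cR N hN i :=
      mem_union_left _ (mem_image.2 ⟨bc, mem_erase.2 ⟨hb, mem_univ _⟩, rfl⟩)
    have he := henc _ ht
    rw [cEnc_idx, cEnc_idx] at he
    rw [hcJ, fm_val] at he
    have e1 : fm N hN (bc.val + (i.val + N - bc.val) % N) = i := Fin.ext hL1
    have e2 : fm N hN (bc.val + (i.val + N - bc.val) % N + 1) = fm N hN (i.val + 1) :=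
      fm_congr N hN (by rw [← Nat.mod_add_mod, hL1])
    rw [e1, e2, congrFun hside bc] at he
    exact add_right_cancel he

end

/-- if `G` is the directed `N`-cycle (receiver `i` knows `x_{i mod N + 1}`),
then there is a vector linear index code for `G` over a finite field `F` with message length
`m = N`, broadcast rate `β = N − 1` (codeword length `N(N−1)`), and locality `r = 2(N−1)/N`;
in particular the optimal rate `N − 1` is achieved with locality strictly less than `2`. -/
theorem cycle_locality (N : ℕ) (hN : 2 ≤ N) (G : IndexProblem N)
    (hK : ∀ i : Fin N, G.K i = {⟨(i.val + 1) % N, Nat.mod_lt _ (by omega)⟩})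
    (F : Type*) [Field F] [Fintype F] :
    (∃ C : IndexCode N G F N (N * (N - 1)), ∀ i,
        ((C.R i).card : ℝ) ≤ 2 * ((N : ℝ) - 1)) ∧
    betaStar F G (2 * ((N : ℝ) - 1) / N) ≤ (N : ℝ) - 1 ∧
    2 * ((N : ℝ) - 1) / N < 2 := by
  have hNR : (0 : ℝ) < N := by exact_mod_cast (by omega : 0 < N)
  have hN1R : (1 : ℝ) ≤ N := by exact_mod_cast (by omega : 1 ≤ N)
  -- the index code
  have hC : ∃ C : IndexCode N G F N (N * (N - 1)), ∀ i,
      ((C.R i).card : ℝ) ≤ 2 * ((N : ℝ) - 1) := by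
    refine ⟨⟨cEnc N hN F, cR N hN, ?_⟩, ?_⟩
    · intro i x y h1 h2
      refine cValid N hN F i x y h1 ?_
      refine h2 (fm N hN (i.val + 1)) ?_
      rw [hK i]
      exact Finset.mem_singleton.2 (Fin.ext rfl)
    · intro i
      have h := cR_card N hN i
      have h' : ((cR N hN i).card : ℝ) ≤ ((2 * (N - 1) : ℕ) : ℝ) := Nat.cast_le.2 h
      refine le_trans h' ?_
      push_cast [Nat.cast_sub (by omega : 1 ≤ N)]
      ring_nf
      linarith
  refine ⟨hC, ?_, ?_⟩
  · obtain ⟨C, hCard⟩ := hC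
    have hmem : ((N : ℝ) - 1) ∈ {β : ℝ | ∃ (m ℓ : ℕ) (_ : 0 < m)
        (C : IndexCode N G F m ℓ),
        (∀ i, ((C.R i).card : ℝ) ≤ (2 * ((N : ℝ) - 1) / N) * m) ∧ β = (ℓ : ℝ) / m} := by
      refine ⟨N, N * (N - 1), by omega, C, ?_, ?_⟩
      · intro i
        have : (2 * ((N : ℝ) - 1) / N) * N = 2 * ((N : ℝ) - 1) :=
          div_mul_cancel₀ _ (ne_of_gt hNR)
        rw [this]
        exact hCard i
      · rw [Nat.cast_mul, Nat.cast_sub (by omega : 1 ≤ N)]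
        push_cast
        field_simp
    refine csInf_le ⟨0, ?_⟩ hmem
    rintro β ⟨m, ℓ, hm, C', -, rfl⟩
    positivity
  · rw [div_lt_iff₀ hNR]
    linarith
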